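/- With the setup of Fano's first decomposition: if Y is a random variable on a finite set 𝒴, Z another random variable, Ỹ = f(Z) an estimator of Y, E the indicator that Ỹ ≠ Y, and p_e = P(E=1), then H(Y|Z) = H(E|Z) + p_e · H(Y | E=1, Z). -/

import Mathlib

open Finset

/-- `entTerm p q = p * log (q / p)` with the convention `entTerm 0 q = 0`.
A conditional entropy `H(A|B)` is the sum of `entTerm p(a,b) p(b)`. -/
noncomputable def entTerm (p q : ℝ) : ℝ :=
  if p = 0 then 0 else p * Real.log (q / p)

/-- Joint probability mass of `(A ω, B ω)` under a pmf `P` on a finite sample space. -/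
noncomputable def jointP {Ω 𝒜 ℬ : Type*} [Fintype Ω] [DecidableEq 𝒜] [DecidableEq ℬ]
    (P : Ω → ℝ) (A : Ω → 𝒜) (B : Ω → ℬ) (a : 𝒜) (b : ℬ) : ℝ :=
  ∑ ω ∈ univ.filter (fun ω => A ω = a ∧ B ω = b), P ω

/-- Probability mass of `A ω = a` under a pmf `P`. -/
noncomputable def margP {Ω 𝒜 : Type*} [Fintype Ω] [DecidableEq 𝒜]
    (P : Ω → ℝ) (A : Ω → 𝒜) (a : 𝒜) : ℝ :=
  ∑ ω ∈ univ.filter (fun ω => A ω = a), P ω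

/-- Conditional entropy `H(A|B)` for a pmf `P` on a finite sample space. -/
noncomputable def condEnt {Ω 𝒜 ℬ : Type*} [Fintype Ω] [Fintype 𝒜] [Fintype ℬ]
    [DecidableEq 𝒜] [DecidableEq ℬ]
    (P : Ω → ℝ) (A : Ω → 𝒜) (B : Ω → ℬ) : ℝ :=
  ∑ a, ∑ b, entTerm (jointP P A B a b) (margP P B b)

lemma entTerm_zero (q : ℝ) : entTerm 0 q = 0 := by simp [entTerm]

lemma jointP_nonneg {Ω 𝒜 ℬ : Type*} [Fintype Ω] [DecidableEq 𝒜] [DecidableEq ℬ]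
    (P : Ω → ℝ) (hP : ∀ ω, 0 ≤ P ω) (A : Ω → 𝒜) (B : Ω → ℬ) (a : 𝒜) (b : ℬ) :
    0 ≤ jointP P A B a b :=
  Finset.sum_nonneg fun ω _ => hP ω

lemma margP_eq_sum_joint {Ω 𝒜 ℬ : Type*} [Fintype Ω] [Fintype 𝒜] [DecidableEq 𝒜] [DecidableEq ℬ]
    (P : Ω → ℝ) (A : Ω → 𝒜) (B : Ω → ℬ) (b : ℬ) :
    margP P B b = ∑ a, jointP P A B a b := by
  unfold margP jointP
  rw [← Finset.sum_fiberwise (univ.filter fun ω => B ω = b) A P]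
  refine Finset.sum_congr rfl fun a _ => Finset.sum_congr ?_ fun _ _ => rfl
  rw [Finset.filter_filter]
  exact Finset.filter_congr fun ω _ => by tauto

/-- key per-z identity -/
lemma key {𝒴 : Type*} [Fintype 𝒴] (pe M J1 : ℝ) (J : 𝒴 → ℝ) (hJ : ∀ y, 0 ≤ J y)
    (hJ1 : J1 = ∑ y, J y) (hpe : J1 ≤ pe) (hM : J1 ≤ M) :
    ∑ y, entTerm (J y) M = entTerm J1 M + ∑ y, pe * entTerm (J y / pe) (J1 / pe) := by
  rcases eq_or_lt_of_le (Finset.sum_nonneg (fun y _ => hJ y) : (0:ℝ) ≤ ∑ y, J y) with h0 | h0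
  · have hall : ∀ y ∈ (univ : Finset 𝒴), J y = 0 :=
      fun y hy => le_antisymm (by
        have := (Finset.sum_eq_zero_iff_of_nonneg (fun y _ => hJ y)).1 h0.symm y hy
        exact le_of_eq this) (hJ y)
    have hJ1' : J1 = 0 := by rw [hJ1, ← h0]
    rw [hJ1', entTerm_zero, zero_add]
    refine Finset.sum_congr rfl fun y hy => ?_
    rw [hall y hy]
    simp [entTerm_zero]
  · have hJ1pos : 0 < J1 := hJ1 ▸ h0
    have hpe0 : (0:ℝ) < pe := lt_of_lt_of_le hJ1pos hpe
    have hM0 : (0:ℝ) < M := lt_of_lt_of_le hJ1pos hM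
    have hterm : ∀ y, entTerm (J y) M = J y * Real.log (M / J1) + pe * entTerm (J y / pe) (J1 / pe) := by
      intro y
      rcases eq_or_lt_of_le (hJ y) with h | h
      · rw [← h]; simp [entTerm_zero, entTerm, (by positivity : pe ≠ 0)]
      · have hy0 : J y ≠ 0 := ne_of_gt h
        have hpe' : pe ≠ 0 := ne_of_gt hpe0
        rw [entTerm, entTerm, if_neg hy0, if_neg (by positivity : J y / pe ≠ 0)]
        have : (J1 / pe) / (J y / pe) = J1 / J y := by field_simp
        rw [this]
        have hsplit : M / J y = (M / J1) * (J1 / J y) := by field_simp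
        rw [hsplit, Real.log_mul (by positivity) (by positivity)]
        field_simp
    rw [Finset.sum_congr rfl fun y _ => hterm y, Finset.sum_add_distrib, ← Finset.sum_mul,
        ← hJ1, entTerm, if_neg (ne_of_gt hJ1pos)]

lemma margP_eq_sum_joint' {Ω 𝒜 ℬ : Type*} [Fintype Ω] [Fintype ℬ] [DecidableEq 𝒜] [DecidableEq ℬ]
    (P : Ω → ℝ) (A : Ω → 𝒜) (B : Ω → ℬ) (a : 𝒜) :
    margP P A a = ∑ b, jointP P A B a b := by
  unfold margP jointP
  rw [← Finset.sum_fiberwise (univ.filter fun ω => A ω = a) B P]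
  refine Finset.sum_congr rfl fun b _ => Finset.sum_congr ?_ fun _ _ => rfl
  rw [Finset.filter_filter]

/-- Fano's first decomposition.  With `Ỹ = f(Z)` an estimator of `Y`,
`E` the indicator of the error event `Ỹ ≠ Y`, and `p_e = P(E = 1)`:
`H(Y|Z) = H(E|Z) + p_e · H(Y | E = 1, Z)`, where `H(Y | E=1, Z)` is the
conditional entropy computed under the measure conditioned on `{E = 1}`. -/
theorem fano_first_decomposition
    {Ω 𝒴 𝒵 : Type*} [Fintype Ω] [Fintype 𝒴] [Fintype 𝒵]
    [DecidableEq 𝒴] [DecidableEq 𝒵]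
    (P : Ω → ℝ) (hP_nonneg : ∀ ω, 0 ≤ P ω) (hP_sum : ∑ ω, P ω = 1)
    (Y : Ω → 𝒴) (Z : Ω → 𝒵) (f : 𝒵 → 𝒴)
    (E : Ω → Bool) (hE : ∀ ω, E ω = decide (f (Z ω) ≠ Y ω))
    (pe : ℝ) (hpe : pe = ∑ ω ∈ univ.filter (fun ω => E ω = true), P ω)
    -- the measure conditioned on the error event {E = 1}
    (Pcond : Ω → ℝ)
    (hPcond : ∀ ω, Pcond ω = (if E ω = true then P ω else 0) / pe) :
    condEnt P Y Z = condEnt P E Z + pe * condEnt Pcond Y Z := by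
  classical
  set J : 𝒴 → 𝒵 → ℝ := fun y z => jointP P Y Z y z with hJdef
  set J' : 𝒴 → 𝒵 → ℝ := fun y z => if y = f z then 0 else jointP P Y Z y z with hJ'def
  set J1 : 𝒵 → ℝ := fun z => ∑ y, J' y z with hJ1def
  set M : 𝒵 → ℝ := fun z => margP P Z z with hMdef
  have hJnn : ∀ y z, 0 ≤ J y z := fun y z => jointP_nonneg P hP_nonneg Y Z y z
  have hJ'nn : ∀ y z, 0 ≤ J' y z := by
    intro y z; by_cases h : y = f z <;> simp [hJ'def, h, hJnn, jointP_nonneg P hP_nonneg]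
  have hJ1nn : ∀ z, 0 ≤ J1 z := fun z => Finset.sum_nonneg fun y _ => hJ'nn y z
  -- (a) jointP of E = false
  have ha : ∀ z, jointP P E Z false z = J (f z) z := by
    intro z
    unfold jointP
    refine Finset.sum_congr (Finset.filter_congr fun ω _ => ?_) fun _ _ => rfl
    constructor
    · rintro ⟨h1, rfl⟩
      refine ⟨?_, rfl⟩
      simp only [hE ω, decide_eq_false_iff_not, not_not] at h1
      exact h1.symm
    · rintro ⟨h1, rfl⟩
      refine ⟨?_, rfl⟩
      rw [hE ω]
      simp [h1]
  -- M decomposition over 𝒴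
  have hMY : ∀ z, M z = ∑ y, J y z := fun z => margP_eq_sum_joint P Y Z z
  have hsumJ : ∀ z, ∑ y, J y z = J (f z) z + J1 z := by
    intro z
    rw [hJ1def]
    have : ∀ y, J y z = (if y = f z then J (f z) z else 0) + J' y z := by
      intro y; by_cases h : y = f z <;> simp [hJ'def, h, hJdef]
    rw [Finset.sum_congr rfl fun y _ => this y, Finset.sum_add_distrib,
        Finset.sum_ite_eq' univ (f z) (fun _ => J (f z) z)]
    simp
  -- (b) jointP of E = true
  have hb : ∀ z, jointP P E Z true z = J1 z := by
    intro z
    have h1 : M z = jointP P E Z true z + jointP P E Z false z := by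
      rw [hMdef]
      simp only [margP_eq_sum_joint P E Z z, Fintype.sum_bool]
    have h2 := (hMY z).symm.trans h1
    rw [hsumJ z, ha z] at h2
    linarith
  -- (e) pe = ∑ z, J1 z
  have he : pe = ∑ z, J1 z := by
    rw [hpe, show (univ.filter fun ω => E ω = true) = univ.filter (fun ω => E ω = true) from rfl]
    have : (∑ ω ∈ univ.filter (fun ω => E ω = true), P ω) = margP P E true := rfl
    rw [this, margP_eq_sum_joint' P E Z true]
    exact Finset.sum_congr rfl fun z _ => hb z
  -- (c) jointP under Pcond
  have hc : ∀ y z, jointP Pcond Y Z y z = J' y z / pe := by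
    intro y z
    unfold jointP
    by_cases h : y = f z
    · have : ∀ ω ∈ univ.filter (fun ω => Y ω = y ∧ Z ω = z), Pcond ω = 0 := by
        intro ω hω
        rw [Finset.mem_filter] at hω
        obtain ⟨-, h1, h2⟩ := hω
        rw [hPcond ω]
        have : E ω = false := by simp [hE ω, h2, h1, h]
        simp [this]
      rw [Finset.sum_congr rfl this]
      simp [hJ'def, h]
    · have : ∀ ω ∈ univ.filter (fun ω => Y ω = y ∧ Z ω = z), Pcond ω = P ω / pe := by
        intro ω hω
        rw [Finset.mem_filter] at hω
        obtain ⟨-, h1, h2⟩ := hω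
        rw [hPcond ω]
        have : E ω = true := by simp [hE ω, h2, h1]; exact fun hh => h (hh ▸ rfl)
        simp [this]
      rw [Finset.sum_congr rfl this, ← Finset.sum_div]
      simp [hJ'def, h, hJdef, jointP]
  -- (d) margP under Pcond
  have hd : ∀ z, margP Pcond Z z = J1 z / pe := by
    intro z
    rw [margP_eq_sum_joint Pcond Y Z z, Finset.sum_congr rfl fun y _ => hc y z,
        ← Finset.sum_div, hJ1def]
  -- bounds
  have hpe_z : ∀ z, J1 z ≤ pe := by
    intro z
    rw [he]
    exact Finset.single_le_sum (fun z _ => hJ1nn z) (mem_univ z)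
  have hM_z : ∀ z, J1 z ≤ M z := by
    intro z
    rw [hMY z, hsumJ z]
    have := hJnn (f z) z
    linarith
  -- assemble
  have hL : condEnt P Y Z =
      ∑ z, (entTerm (J (f z) z) (M z) + ∑ y, entTerm (J' y z) (M z)) := by
    unfold condEnt
    rw [Finset.sum_comm]
    refine Finset.sum_congr rfl fun z _ => ?_
    have hs1 : ∑ y, entTerm (J y z) (M z)
        = entTerm (J (f z) z) (M z) + ∑ y ∈ univ.erase (f z), entTerm (J y z) (M z) :=
      (Finset.add_sum_erase univ (fun y => entTerm (J y z) (M z)) (mem_univ (f z))).symm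
    have hs2 : ∑ y, entTerm (J' y z) (M z)
        = entTerm (J' (f z) z) (M z) + ∑ y ∈ univ.erase (f z), entTerm (J' y z) (M z) :=
      (Finset.add_sum_erase univ (fun y => entTerm (J' y z) (M z)) (mem_univ (f z))).symm
    rw [hs1, hs2]
    have : entTerm (J' (f z) z) (M z) = 0 := by simp [hJ'def, entTerm_zero]
    rw [this, zero_add]
    refine congrArg _ (Finset.sum_congr rfl fun y hy => ?_)
    have hy' : y ≠ f z := (Finset.mem_erase.1 hy).1
    simp [hJ'def, hy', hJdef]
  have hR1 : condEnt P E Z = ∑ z, (entTerm (J (f z) z) (M z) + entTerm (J1 z) (M z)) := by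
    unfold condEnt
    rw [Fintype.sum_bool]
    rw [← Finset.sum_add_distrib]
    refine Finset.sum_congr rfl fun z _ => ?_
    rw [hb z, ha z, add_comm]
  have hR2 : pe * condEnt Pcond Y Z = ∑ z, ∑ y, pe * entTerm (J' y z / pe) (J1 z / pe) := by
    unfold condEnt
    rw [Finset.sum_comm, Finset.mul_sum]
    refine Finset.sum_congr rfl fun z _ => ?_
    rw [Finset.mul_sum]
    refine Finset.sum_congr rfl fun y _ => ?_
    rw [hc y z, hd z]
  rw [hL, hR1, hR2, ← Finset.sum_add_distrib]
  refine Finset.sum_congr rfl fun z _ => ?_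
  rw [key pe (M z) (J1 z) (fun y => J' y z) (fun y => hJ'nn y z) rfl (hpe_z z) (hM_z z)]
  ring
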